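/- (First Picard–Fuchs relation.) For every h > 0 one has I_0(h) = (4/3)·h·I'_0(h) + (1/3)·I'_2(h). -/

import Mathlib

open Real Set Filter intervalIntegral MeasureTheory

/-- Right endpoint of the exterior oval: `x_max(h) = √(1 + √(1+4h))`. -/
noncomputable def xmax (h : ℝ) : ℝ := Real.sqrt (1 + Real.sqrt (1 + 4*h))

/-- Complete elliptic integral `I_i(h) = ∫_{-x_max}^{x_max} x^i √(2h + x² - x⁴/2) dx`. -/
noncomputable def ellI (i : ℕ) (h : ℝ) : ℝ :=
  ∫ x in (-xmax h)..(xmax h), x^i * Real.sqrt (2*h + x^2 - x^4/2)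

/-- Complete elliptic integral `I'_i(h) = ∫_{-x_max}^{x_max} x^i (2h + x² - x⁴/2)^{-1/2} dx`. -/
noncomputable def ellI' (i : ℕ) (h : ℝ) : ℝ :=
  ∫ x in (-xmax h)..(xmax h), x^i / Real.sqrt (2*h + x^2 - x^4/2)

namespace PFAux

variable {h : ℝ}

lemma s_gt_one (hh : 0 < h) : 1 < Real.sqrt (1 + 4*h) := by
  nlinarith [Real.sq_sqrt (by linarith : (0:ℝ) ≤ 1 + 4*h),
    Real.sqrt_nonneg (1 + 4*h)]

lemma xmax_pos (hh : 0 < h) : 0 < xmax h := by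
  have := Real.sqrt_nonneg (1 + 4*h)
  exact Real.sqrt_pos.mpr (by linarith)

lemma xmax_sq (hh : 0 < h) : (xmax h)^2 = 1 + Real.sqrt (1 + 4*h) := by
  have := Real.sqrt_nonneg (1 + 4*h)
  exact Real.sq_sqrt (by linarith)

/-- Factorization of the potential. -/
lemma p_factor (hh : 0 < h) (x : ℝ) :
    2*h + x^2 - x^4/2
      = (1/2) * ((xmax h)^2 - x^2) * (x^2 + (Real.sqrt (1 + 4*h) - 1)) := by
  have hs : (Real.sqrt (1 + 4*h))^2 = 1 + 4*h := Real.sq_sqrt (by linarith)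
  rw [xmax_sq hh]
  linear_combination (-(1:ℝ)/2) * hs

lemma p_pos (hh : 0 < h) {x : ℝ} (hx : x ∈ Ioo (-xmax h) (xmax h)) :
    0 < 2*h + x^2 - x^4/2 := by
  rw [p_factor hh]
  have h1 : x^2 < (xmax h)^2 := sq_lt_sq' hx.1 hx.2
  have h2 : 1 < Real.sqrt (1 + 4*h) := s_gt_one hh
  nlinarith [sq_nonneg x]

lemma p_at_xmax (hh : 0 < h) : 2*h + (xmax h)^2 - (xmax h)^4/2 = 0 := by
  rw [p_factor hh]; ring

lemma p_at_neg_xmax (hh : 0 < h) : 2*h + (-xmax h)^2 - (-xmax h)^4/2 = 0 := by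
  have := p_at_xmax hh
  nlinarith [this]

/-- Integrability of `x^i / √(2h + x² - x⁴/2)` on the right half `[0, xmax]`. -/
lemma integrable_inv_right (hh : 0 < h) (i : ℕ) :
    IntervalIntegrable (fun x => x^i / Real.sqrt (2*h + x^2 - x^4/2))
      volume 0 (xmax h) := by
  set a := xmax h with ha
  set c := Real.sqrt (1 + 4*h) - 1 with hc
  have hcpos : 0 < c := by have := s_gt_one hh; rw [hc]; linarith
  have hapos : 0 < a := xmax_pos hh
  have hK : 0 < Real.sqrt (a * c / 2) := Real.sqrt_pos.mpr (by positivity)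
  set C : ℝ := a^i / Real.sqrt (a * c / 2) with hC
  have hCpos : 0 < C := by positivity
  have hg : IntervalIntegrable (fun x => C * (a - x) ^ (-(1/2) : ℝ)) volume 0 a := by
    have h1 : IntervalIntegrable (fun x : ℝ => x ^ (-(1/2) : ℝ)) volume 0 a :=
      intervalIntegrable_rpow' (by norm_num)
    have h2 := h1.comp_sub_left a
    simpa using (h2.const_mul C).symm
  refine hg.mono_fun ?_ ?_
  · refine Measurable.aestronglyMeasurable ?_
    exact (measurable_id.pow_const i).div
      ((Real.continuous_sqrt.comp (by continuity)).measurable)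
  · rw [uIoc_of_le hapos.le]
    refine (ae_restrict_iff' measurableSet_Ioc).mpr (ae_of_all _ ?_)
    intro x hx
    show ‖x^i / Real.sqrt (2*h + x^2 - x^4/2)‖ ≤ ‖C * (a - x) ^ (-(1/2) : ℝ)‖
    rcases eq_or_lt_of_le hx.2 with hxa | hxa
    · -- x = a : the left side vanishes
      have hp0 : 2*h + x^2 - x^4/2 = 0 := by rw [hxa]; exact p_at_xmax hh
      rw [hp0, Real.sqrt_zero, div_zero, norm_zero]
      exact norm_nonneg _
    · have hx0 : 0 < x := hx.1
      have hax : 0 < a - x := by linarith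
      have hbound : a * c / 2 * (a - x) ≤ 2*h + x^2 - x^4/2 := by
        rw [p_factor hh, ← ha, ← hc]
        have hsq : (a)^2 - x^2 = (a - x) * (a + x) := by ring
        rw [hsq]
        nlinarith [mul_nonneg hax.le (mul_nonneg hapos.le (sq_nonneg x)),
          mul_nonneg hax.le (mul_nonneg hx0.le (sq_nonneg x)),
          mul_nonneg hax.le (mul_nonneg hx0.le hcpos.le)]
      have hppos : 0 < 2*h + x^2 - x^4/2 :=
        lt_of_lt_of_le (by positivity) hbound
      have hsqp : Real.sqrt (a * c / 2) * Real.sqrt (a - x)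
          ≤ Real.sqrt (2*h + x^2 - x^4/2) := by
        rw [← Real.sqrt_mul (by positivity)]
        exact Real.sqrt_le_sqrt hbound
      have hsx : 0 < Real.sqrt (a - x) := Real.sqrt_pos.mpr hax
      have hsp : 0 < Real.sqrt (2*h + x^2 - x^4/2) := Real.sqrt_pos.mpr hppos
      have hnum : |x|^i ≤ a^i := by
        refine pow_le_pow_left₀ (abs_nonneg x) ?_ i
        rw [abs_of_pos hx0]; exact hx.2
      have hrw : (a - x) ^ (-(1/2) : ℝ) = 1 / Real.sqrt (a - x) := by
        rw [Real.rpow_neg hax.le, Real.sqrt_eq_rpow]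
        exact (one_div _).symm
      calc ‖x^i / Real.sqrt (2*h + x^2 - x^4/2)‖
          = |x|^i / Real.sqrt (2*h + x^2 - x^4/2) := by
            rw [norm_div, norm_pow, Real.norm_eq_abs, Real.norm_eq_abs,
              abs_of_pos hsp]
        _ ≤ a^i / (Real.sqrt (a*c/2) * Real.sqrt (a - x)) :=
            div_le_div₀ (by positivity) hnum (by positivity) hsqp
        _ = C * (a - x) ^ (-(1/2) : ℝ) := by
            rw [hrw, hC, div_mul_div_comm, mul_one]
        _ = ‖C * (a - x) ^ (-(1/2) : ℝ)‖ := by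
            rw [Real.norm_eq_abs, abs_of_nonneg (by positivity)]

/-- Integrability on the left half. -/
lemma integrable_inv_left (hh : 0 < h) (i : ℕ) :
    IntervalIntegrable (fun x => x^i / Real.sqrt (2*h + x^2 - x^4/2))
      volume (-xmax h) 0 := by
  refine (IntervalIntegrable.iff_comp_neg (by simp)).mpr ?_
  simp only [neg_neg, neg_zero]
  have key : (fun x : ℝ => (-x)^i / Real.sqrt (2*h + (-x)^2 - (-x)^4/2))
      = fun x : ℝ => (-1:ℝ)^i * (x^i / Real.sqrt (2*h + x^2 - x^4/2)) := by
    funext x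
    have h2 : (-x)^2 = x^2 := by ring
    have h4 : (-x)^4 = x^4 := by ring
    rw [h2, h4, neg_pow, mul_div_assoc]
  rw [key]
  exact ((integrable_inv_right hh i).symm).const_mul _

lemma integrable_inv (hh : 0 < h) (i : ℕ) :
    IntervalIntegrable (fun x => x^i / Real.sqrt (2*h + x^2 - x^4/2))
      volume (-xmax h) (xmax h) :=
  (integrable_inv_left hh i).trans (integrable_inv_right hh i)

lemma integrable_sqrt (hh : 0 < h) :
    IntervalIntegrable (fun x => Real.sqrt (2*h + x^2 - x^4/2))
      volume (-xmax h) (xmax h) :=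
  (Real.continuous_sqrt.comp (by continuity)).intervalIntegrable _ _

/-- First relation: `I₀ = 2h·I'₀ + I'₂ - (1/2)·I'₄`. -/
lemma split (hh : 0 < h) :
    ellI 0 h = 2*h*ellI' 0 h + ellI' 2 h - (1/2)*ellI' 4 h := by
  have i0 := integrable_inv hh 0
  have i2 := integrable_inv hh 2
  have i4 := integrable_inv hh 4
  have key : ∀ x : ℝ, x^0 * Real.sqrt (2*h + x^2 - x^4/2)
      = 2*h*(x^0/Real.sqrt (2*h + x^2 - x^4/2))
        + x^2/Real.sqrt (2*h + x^2 - x^4/2)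
        - (1/2)*(x^4/Real.sqrt (2*h + x^2 - x^4/2)) := by
    intro x
    simp only [pow_zero, one_mul]
    by_cases hz : Real.sqrt (2*h + x^2 - x^4/2) = 0
    · rw [hz]; simp
    · have hpos : 0 ≤ 2*h + x^2 - x^4/2 := by
        by_contra hneg
        exact hz (Real.sqrt_eq_zero'.mpr (le_of_not_ge fun hle => hneg (by linarith)))
      have h2 : Real.sqrt (2*h + x^2 - x^4/2) * Real.sqrt (2*h + x^2 - x^4/2)
          = 2*h + x^2 - x^4/2 := Real.mul_self_sqrt hpos
      have hcomb : 2*h*(1/Real.sqrt (2*h + x^2 - x^4/2))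
          + x^2/Real.sqrt (2*h + x^2 - x^4/2)
          - (1/2)*(x^4/Real.sqrt (2*h + x^2 - x^4/2))
          = (2*h + x^2 - x^4/2)/Real.sqrt (2*h + x^2 - x^4/2) := by ring
      rw [hcomb, eq_div_iff hz]
      exact h2
  unfold ellI ellI'
  rw [intervalIntegral.integral_congr (g :=
    fun x => 2*h*(x^0/Real.sqrt (2*h + x^2 - x^4/2))
      + x^2/Real.sqrt (2*h + x^2 - x^4/2)
      - (1/2)*(x^4/Real.sqrt (2*h + x^2 - x^4/2))) (fun x _ => key x)]
  rw [intervalIntegral.integral_sub ((i0.const_mul _).add i2) (i4.const_mul _),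
    intervalIntegral.integral_add (i0.const_mul _) i2,
    intervalIntegral.integral_const_mul, intervalIntegral.integral_const_mul]

/-- Integration by parts: `I₀ + I'₂ - I'₄ = 0`. -/
lemma byparts (hh : 0 < h) : ellI 0 h + ellI' 2 h - ellI' 4 h = 0 := by
  have i2 := integrable_inv hh 2
  have i4 := integrable_inv hh 4
  set a := xmax h with ha
  have hapos : 0 < a := xmax_pos hh
  have hab : -a ≤ a := by linarith
  have hFTC : (∫ x in (-a)..a,
        (Real.sqrt (2*h + x^2 - x^4/2)
          + x^2/Real.sqrt (2*h + x^2 - x^4/2)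
          - x^4/Real.sqrt (2*h + x^2 - x^4/2)))
      = a * Real.sqrt (2*h + a^2 - a^4/2)
        - (-a) * Real.sqrt (2*h + (-a)^2 - (-a)^4/2) := by
    apply intervalIntegral.integral_eq_sub_of_hasDeriv_right_of_le
      (f := fun y => y * Real.sqrt (2*h + y^2 - y^4/2)) hab
    · exact ((continuous_id.mul
        (Real.continuous_sqrt.comp (by continuity))).continuousOn)
    · intro x hx
      have hp : 0 < 2*h + x^2 - x^4/2 := p_pos hh hx
      have hne : Real.sqrt (2*h + x^2 - x^4/2) ≠ 0 := (Real.sqrt_pos.mpr hp).ne'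
      have hd1 : HasDerivAt (fun y : ℝ => 2*h + y^2 - y^4/2) (2*x - 2*x^3) x := by
        have h2 := hasDerivAt_pow 2 x
        have h4 := hasDerivAt_pow 4 x
        have := (h2.const_add (2*h)).fun_sub (h4.div_const 2)
        refine this.congr_deriv ?_
        push_cast; ring
      have hd2 : HasDerivAt (fun y : ℝ => Real.sqrt (2*h + y^2 - y^4/2))
          ((2*x - 2*x^3) / (2*Real.sqrt (2*h + x^2 - x^4/2))) x := by
        have := (Real.hasDerivAt_sqrt (ne_of_gt hp)).comp x hd1
        refine this.congr_deriv ?_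
        ring
      have hF := (hasDerivAt_id' x).fun_mul hd2
      refine HasDerivAt.hasDerivWithinAt ?_
      refine hF.congr_deriv ?_
      field_simp
      ring
    · exact ((integrable_sqrt hh).add i2).sub i4
  have hz1 : Real.sqrt (2*h + a^2 - a^4/2) = 0 := by
    rw [p_at_xmax hh]; exact Real.sqrt_zero
  have hz2 : Real.sqrt (2*h + (-a)^2 - (-a)^4/2) = 0 := by
    rw [p_at_neg_xmax hh]; exact Real.sqrt_zero
  rw [hz1, hz2, mul_zero, mul_zero, sub_zero] at hFTC
  rw [intervalIntegral.integral_sub ((integrable_sqrt hh).add i2) i4,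
    intervalIntegral.integral_add (integrable_sqrt hh) i2] at hFTC
  have e0 : ellI 0 h = ∫ x in (-a)..a, Real.sqrt (2*h + x^2 - x^4/2) := by
    unfold ellI
    simp only [pow_zero, one_mul, ha]
  unfold ellI'
  rw [e0]
  linarith

end PFAux

/-- First Picard-Fuchs relation. -/
theorem picard_fuchs_one (h : ℝ) (hh : 0 < h) :
    ellI 0 h = (4/3) * h * ellI' 0 h + (1/3) * ellI' 2 h := by
  have hA := PFAux.split hh
  have hB := PFAux.byparts hh
  linarith
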